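/- Let A be a unital C*-algebra and let U = (u_{i,j})_{i,j=1}^n be a bi-unitary matrix over A such that each entry u_{i,j} is a partial isometry. Then for all i ≠ j and all k: u_{i,k} u_{j,k}^* = 0, u_{k,i} u_{k,j}^* = 0, u_{i,k}^* u_{j,k} = 0, and u_{k,i}^* u_{k,j} = 0. -/
import Mathlib

/-- Auxiliary: in a unital C*-algebra, if a finite family of projections sums to 1,
then the projections are pairwise orthogonal. -/
lemma ortho_of_sum_proj {A : Type*} [NormedRing A] [StarRing A] [CStarRing A]
    [CompleteSpace A] [NormedAlgebra ℂ A] [StarModule ℂ A]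
    {n : ℕ} (p : Fin n → A)
    (hsa : ∀ a, star (p a) = p a) (hidem : ∀ a, p a * p a = p a)
    (hsum : ∑ a, p a = 1) {i j : Fin n} (hij : i ≠ j) : p i * p j = 0 := by
  letI : CStarAlgebra A := { }
  letI := CStarAlgebra.spectralOrder A
  haveI := CStarAlgebra.spectralOrderedRing A
  have hnn : ∀ a, (0 : A) ≤ p a := fun a => by
    have h := star_mul_self_nonneg (p a)
    rwa [hsa, hidem] at h
  -- p i + p j ≤ 1
  have hle : p i + p j ≤ 1 := by
    have hsub : ({i, j} : Finset (Fin n)) ⊆ Finset.univ := Finset.subset_univ _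
    have h := Finset.sum_le_sum_of_subset_of_nonneg hsub
      (fun a _ _ => hnn a) (f := p)
    rwa [Finset.sum_pair hij, hsum] at h
  have hle' : p j ≤ 1 - p i := le_sub_iff_add_le.mpr (by rwa [add_comm])
  -- conjugate by p i
  have h2 : star (p i) * p j * p i ≤ star (p i) * (1 - p i) * p i :=
    star_left_conjugate_le_conjugate hle' (p i)
  have hzero : p i * (1 - p i) * p i = 0 := by
    rw [mul_sub, mul_one, sub_mul, hidem i, hidem i, sub_self]
  rw [hsa i, hzero] at h2
  have h3 : p i * p j * p i = 0 :=
    le_antisymm h2 (by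
      have h4 := star_mul_self_nonneg (p j * p i)
      rwa [star_mul, hsa i, hsa j, ← mul_assoc, mul_assoc (p i) (p j) (p j),
        hidem j] at h4)
  have h5 : star (p j * p i) * (p j * p i) = 0 := by
    rw [star_mul, hsa i, hsa j, ← mul_assoc, mul_assoc (p i) (p j) (p j), hidem j, h3]
  have h6 : p j * p i = 0 := (CStarRing.star_mul_self_eq_zero_iff _).mp h5
  -- transfer to p i * p j = 0 by taking star
  have := congrArg star h6
  rwa [star_mul, hsa i, hsa j, star_zero] at this

/-- Auxiliary: a family of partial isometries whose "range" sums give 1 has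
orthogonal rows. -/
lemma key_ortho {A : Type*} [NormedRing A] [StarRing A] [CStarRing A]
    [CompleteSpace A] [NormedAlgebra ℂ A] [StarModule ℂ A]
    {n : ℕ} (v : Fin n → A) (hpi : ∀ a, v a * star (v a) * v a = v a)
    (hsum : ∑ a, star (v a) * v a = 1) {i j : Fin n} (hij : i ≠ j) :
    v i * star (v j) = 0 := by
  have h0 : (star (v i) * v i) * (star (v j) * v j) = 0 := by
    refine ortho_of_sum_proj (fun a => star (v a) * v a) (fun a => by
      rw [star_mul, star_star]) (fun a => ?_) hsum hij
    calc star (v a) * v a * (star (v a) * v a)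
        = star (v a) * (v a * star (v a) * v a) := by noncomm_ring
      _ = star (v a) * v a := by rw [hpi a]
  have A : v i * (star (v i) * v i) = v i := by rw [← mul_assoc, hpi i]
  have B : (star (v j) * v j) * star (v j) = star (v j) := by
    have := congrArg star (hpi j)
    simp only [star_mul, star_star] at this
    rw [mul_assoc]
    exact this
  have key : v i * (star (v i) * v i) * ((star (v j) * v j) * star (v j)) = 0 := by
    calc v i * (star (v i) * v i) * ((star (v j) * v j) * star (v j))
        = v i * ((star (v i) * v i) * (star (v j) * v j)) * star (v j) := by noncomm_ring
      _ = 0 := by rw [h0, mul_zero, zero_mul]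
  rwa [A, B] at key

/-- Variant of `key_ortho` for the adjoint side. -/
lemma key_ortho' {A : Type*} [NormedRing A] [StarRing A] [CStarRing A]
    [CompleteSpace A] [NormedAlgebra ℂ A] [StarModule ℂ A]
    {n : ℕ} (v : Fin n → A) (hpi : ∀ a, v a * star (v a) * v a = v a)
    (hsum : ∑ a, v a * star (v a) = 1) {i j : Fin n} (hij : i ≠ j) :
    star (v i) * v j = 0 := by
  have h := key_ortho (fun a => star (v a)) (fun a => by
      have := congrArg star (hpi a)
      simpa only [star_mul, star_star, mul_assoc] using this)
    (by simpa only [star_star] using hsum) hij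
  simpa only [star_star] using h

/-- if all entries of a bi-unitary matrix are partial isometries,
then entries in the same row or column are mutually orthogonal. -/
theorem stmt1 {A : Type*} [NormedRing A] [StarRing A] [CStarRing A]
    [CompleteSpace A] [NormedAlgebra ℂ A] [StarModule ℂ A]
    (n : ℕ) (u : Fin n → Fin n → A)
    (hUU : ∀ a b : Fin n, ∑ x, u a x * star (u b x) = if a = b then 1 else 0)
    (hUU' : ∀ x y : Fin n, ∑ a, star (u a x) * u a y = if x = y then 1 else 0)
    (hUt : ∀ x y : Fin n, ∑ a, u a x * star (u a y) = if x = y then 1 else 0)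
    (hUt' : ∀ a b : Fin n, ∑ x, star (u a x) * u b x = if a = b then 1 else 0)
    (hpi : ∀ i j : Fin n, u i j * star (u i j) * u i j = u i j) :
    ∀ i j k : Fin n, i ≠ j →
      u i k * star (u j k) = 0 ∧ u k i * star (u k j) = 0 ∧
      star (u i k) * u j k = 0 ∧ star (u k i) * u k j = 0 := by
  intro i j k hij
  refine ⟨?_, ?_, ?_, ?_⟩
  · exact key_ortho (fun a => u a k) (fun a => hpi a k)
      (by simpa using hUU' k k) hij
  · exact key_ortho (fun x => u k x) (fun x => hpi k x)
      (by simpa using hUt' k k) hij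
  · exact key_ortho' (fun a => u a k) (fun a => hpi a k)
      (by simpa using hUt k k) hij
  · exact key_ortho' (fun x => u k x) (fun x => hpi k x)
      (by simpa using hUU k k) hij
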